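/- For every positive integer a, ∫₀¹ ((ax))((x))¹¹ dx = (-353792 + 582400a² - 288288a⁴ + 68640a⁶ - 10010a⁸ + 1365a¹⁰)/(16773120a¹¹). -/

import Mathlib

open Real MeasureTheory intervalIntegral

/-- The sawtooth (first Bernoulli) function `((x))`. -/
noncomputable def saw (x : ℝ) : ℝ := if Int.fract x = 0 then 0 else Int.fract x - 1/2

private noncomputable def Tterm (k c : ℝ) : ℝ :=
  12*c*((2*k+2-c)^13 - (2*k-c)^13) + 13*c*(c-2*k-1)*((2*k+2-c)^12 - (2*k-c)^12)

private theorem sumT (c : ℝ) (a : ℕ) : ∑ k ∈ Finset.range a, Tterm (k : ℝ) c =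
    (-2830336/105)*(a:ℝ)*c + 133120*(a:ℝ)*c^3 - 109824*(a:ℝ)*c^5 + 36608*(a:ℝ)*c^7
      - 6864*(a:ℝ)*c^9 + 1144*(a:ℝ)*c^11 - 266240*(a:ℝ)^2*c^2 + 439296*(a:ℝ)^2*c^4
      - 219648*(a:ℝ)^2*c^6 + 54912*(a:ℝ)^2*c^8 - 11440*(a:ℝ)^2*c^10 + (532480/3)*(a:ℝ)^3*c
      - 878592*(a:ℝ)^3*c^3 + 732160*(a:ℝ)^3*c^5 - 256256*(a:ℝ)^3*c^7 + 68640*(a:ℝ)^3*c^9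
      + 878592*(a:ℝ)^4*c^2 - 1464320*(a:ℝ)^4*c^4 + 768768*(a:ℝ)^4*c^6 - 274560*(a:ℝ)^4*c^8
      + (-1757184/5)*(a:ℝ)^5*c + 1757184*(a:ℝ)^5*c^3 - 1537536*(a:ℝ)^5*c^5 + 768768*(a:ℝ)^5*c^7
      - 1171456*(a:ℝ)^6*c^2 + 2050048*(a:ℝ)^6*c^4 - 1537536*(a:ℝ)^6*c^6 + (2342912/7)*(a:ℝ)^7*c
      - 1757184*(a:ℝ)^7*c^3 + 2196480*(a:ℝ)^7*c^5 + 878592*(a:ℝ)^8*c^2 - 2196480*(a:ℝ)^8*c^4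
      + (-585728/3)*(a:ℝ)^9*c + 1464320*(a:ℝ)^9*c^3 - 585728*(a:ℝ)^10*c^2 + 106496*(a:ℝ)^11*c := by
  induction a with
  | zero => simp
  | succ n ih =>
    rw [Finset.sum_range_succ, ih, Tterm]
    push_cast
    ring

theorem franel_a1x11 (a : ℕ) (ha : 0 < a) :
    ∫ x in (0:ℝ)..1, saw (a * x) * (saw x)^11 =
      (-353792 + 582400 * (a:ℝ)^2 - 288288 * (a:ℝ)^4 + 68640 * (a:ℝ)^6
        - 10010 * (a:ℝ)^8 + 1365 * (a:ℝ)^10) / (16773120 * (a:ℝ)^11) := by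
  have hb : (0:ℝ) < (a:ℝ) := by exact_mod_cast ha
  have hb' : (a:ℝ) ≠ 0 := ne_of_gt hb
  set b : ℝ := (a : ℝ) with hbdef
  set f : ℝ → ℝ := fun x => saw (b * x) * (saw x)^11 with hf
  set N : Set ℝ := {x : ℝ | ∃ m : ℤ, b * x = (m:ℝ)} with hN
  have hNnull : volume N = 0 := by
    have hsub : N ⊆ Set.range fun m : ℤ => (m:ℝ)/b := by
      rintro x ⟨m, hm⟩
      exact ⟨m, by simp only []; rw [← hm, mul_comm, mul_div_assoc, div_self hb', mul_one]⟩
    exact measure_mono_null hsub ((Set.countable_range _).measure_zero _)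
  have haeN : ∀ᵐ x : ℝ, x ∉ N := by
    rw [MeasureTheory.ae_iff]; simpa using hNnull
  set ι : ℕ → ℝ := fun k => (k:ℝ)/b with hι
  have hle : ∀ k : ℕ, ι k ≤ ι (k+1) := by
    intro k
    apply div_le_div_of_nonneg_right ?_ hb.le
    push_cast; linarith
  -- pointwise identity off N on each subinterval
  have hpt : ∀ k : ℕ, k < a → ∀ x : ℝ, x ∉ N → x ∈ Set.Ioc (ι k) (ι (k+1)) →
      f x = (b*x - k - 1/2) * (x - 1/2)^11 := by
    intro k hk x hxN hx
    obtain ⟨hx1, hx2⟩ := hx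
    simp only [hι] at hx1 hx2
    push_cast at hx2
    have h1 : (k:ℝ) < b * x := by
      have := (div_lt_iff₀ hb).mp hx1; linarith
    have h2 : b * x < (k:ℝ) + 1 := by
      have hle2 : b * x ≤ (k:ℝ) + 1 := by
        have := (le_div_iff₀ hb).mp hx2; linarith
      rcases lt_or_eq_of_le hle2 with h | h
      · exact h
      · exact absurd ⟨(k:ℤ)+1, by push_cast; linarith⟩ hxN
    have hka : (k:ℝ) + 1 ≤ b := by
      rw [hbdef]; exact_mod_cast Nat.succ_le_of_lt hk
    have hx0 : 0 < x := lt_of_le_of_lt (by positivity) hx1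
    have hxlt1 : x < 1 := by
      have : b * x < b * 1 := by linarith
      exact lt_of_mul_lt_mul_left this (le_of_lt hb)
    have hfr : Int.fract (b*x) = b*x - k := by
      rw [Int.fract]
      have : ⌊b*x⌋ = (k:ℤ) := Int.floor_eq_iff.mpr ⟨by push_cast; linarith, by push_cast; linarith⟩
      rw [this]; push_cast; ring
    have hne : b*x - (k:ℝ) ≠ 0 := fun h => hxN ⟨(k:ℤ), by push_cast; linarith⟩
    have hfx : Int.fract x = x := Int.fract_eq_self.mpr ⟨le_of_lt hx0, hxlt1⟩
    simp only [hf, saw, hfr, hfx, if_neg hne, if_neg (ne_of_gt hx0)]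
  -- each piece: integrability and value
  have hpiece : ∀ k : ℕ, k < a →
      IntervalIntegrable f volume (ι k) (ι (k+1)) ∧
      ∫ x in (ι k)..(ι (k+1)), f x = Tterm (k:ℝ) b / (1277952 * b^13) := by
    intro k hk
    set p : ℝ → ℝ := fun x => (b*x - k - 1/2) * (x - 1/2)^11 with hp
    have hpc : Continuous p := by fun_prop
    have hIp : IntervalIntegrable p volume (ι k) (ι (k+1)) := hpc.intervalIntegrable _ _
    have haep : ∀ᵐ x ∂(volume.restrict (Set.Ioc (ι k) (ι (k+1)))), f x = p x := by
      filter_upwards [ae_restrict_of_ae haeN, ae_restrict_mem measurableSet_Ioc] with x h1 h2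
      exact hpt k hk x h1 h2
    have hIf : IntervalIntegrable f volume (ι k) (ι (k+1)) := by
      rw [intervalIntegrable_iff_integrableOn_Ioc_of_le (hle k)] at hIp ⊢
      exact hIp.congr_fun_ae (haep.mono fun x h => h.symm)
    refine ⟨hIf, ?_⟩
    have hcongr : ∫ x in (ι k)..(ι (k+1)), f x = ∫ x in (ι k)..(ι (k+1)), p x := by
      apply intervalIntegral.integral_congr_ae
      filter_upwards [haeN] with x hx hmem
      rw [Set.uIoc_of_le (hle k)] at hmem
      exact hpt k hk x hx hmem
    set H : ℝ → ℝ := fun y => b*(y-1/2)^13/13 + (b/2 - (k:ℝ) - 1/2)*(y-1/2)^12/12 with hH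
    have hderiv : ∀ x ∈ Set.uIcc (ι k) (ι (k+1)), HasDerivAt H (p x) x := by
      intro x _
      have h0 : HasDerivAt (fun y : ℝ => y - 1/2) 1 x := (hasDerivAt_id x).sub_const _
      have h13 := ((h0.fun_pow 13).const_mul b).div_const 13
      have h12 := ((h0.fun_pow 12).const_mul (b/2 - (k:ℝ) - 1/2)).div_const 12
      have := h13.fun_add h12
      refine this.congr_deriv ?_
      simp only [hp]
      push_cast
      ring
    rw [hcongr, intervalIntegral.integral_eq_sub_of_hasDerivAt hderiv hIp]
    simp only [hH, hι]
    push_cast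
    rw [Tterm]
    field_simp
    ring
  -- assemble
  have hsplit : ∑ k ∈ Finset.range a, ∫ x in (ι k)..(ι (k+1)), f x = ∫ x in (ι 0)..(ι a), f x :=
    intervalIntegral.sum_integral_adjacent_intervals (fun k hk => (hpiece k hk).1)
  have hι0 : ι 0 = 0 := by simp [hι]
  have hιa : ι a = 1 := by simp [hι]; exact div_self hb'
  rw [← hι0, ← hιa] at *
  rw [← hsplit]
  calc ∑ k ∈ Finset.range a, ∫ x in (ι k)..(ι (k+1)), f x
      = ∑ k ∈ Finset.range a, Tterm (k:ℝ) b / (1277952 * b^13) :=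
        Finset.sum_congr rfl fun k hk => (hpiece k (Finset.mem_range.mp hk)).2
    _ = (∑ k ∈ Finset.range a, Tterm (k:ℝ) b) / (1277952 * b^13) := by
        rw [Finset.sum_div]
    _ = _ := by
        rw [sumT]
        rw [div_eq_div_iff (by positivity) (by positivity)]
        ring
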